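/- Consider the closed-loop DAE E ẋ = (A - BB*P(t))x with E = [[I,0],[0,0]], where P(t) = P₊ + P_Δ(t) and the second block column of P_Δ(t) is zero. Then the lower-left block of A - BB*P(t) restricted to the (2,2) entry equals A₊₂₂ (the (2,2) block of A₊ = A - BB*P₊), and if A₊₂₂ is invertible, the DAE can be written in decoupled (strangeness-free) form ẋ₁ = Â₁(t)x₁, x₂ = Â₂(t)x₁, with Â₁(t) = Ā - B̄B̄*P_{Δ,1}(t) and Â₂(t) = -A₊₂₂⁻¹A₊₂₁ + A₊₂₂⁻¹B₂B̄*P_{Δ,1}(t), where Ā = A₊₁₁ - A₊₁₂A₊₂₂⁻¹A₊₂₁ and B̄ = B₁ - A₊₁₂A₊₂₂⁻¹B₂. -/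

import Mathlib

open Matrix

/-- Decoupling of the closed-loop DAE. With `P(t) = P₊ + P_Δ(t)` where the second
block column of `P_Δ(t)` vanishes, the `(2,2)` block of the closed-loop matrix
`A₊ - BBᵀP_Δ(t)` equals `A₊₂₂`; and if `A₊₂₂` is invertible, any state `(v₁, v₂)`
satisfying the algebraic (second) block row, together with a derivative value `d₁`
satisfying the differential (first) block row, fulfills the strangeness-free
decoupled form `v₂ = Â₂(t)v₁` and `d₁ = Â₁(t)v₁` with
`Â₁(t) = Ā - B̄B̄ᵀP_{Δ,1}(t)`, `Â₂(t) = -A₊₂₂⁻¹A₊₂₁ + A₊₂₂⁻¹B₂B̄ᵀP_{Δ,1}(t)`,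
`Ā = A₊₁₁ - A₊₁₂A₊₂₂⁻¹A₊₂₁`, `B̄ = B₁ - A₊₁₂A₊₂₂⁻¹B₂`. -/
theorem closed_loop_dae_strangeness_free
    {d a m : ℕ}
    (Ap11 : Matrix (Fin d) (Fin d) ℝ) (Ap12 : Matrix (Fin d) (Fin a) ℝ)
    (Ap21 : Matrix (Fin a) (Fin d) ℝ) (Ap22 : Matrix (Fin a) (Fin a) ℝ)
    (B1 : Matrix (Fin d) (Fin m) ℝ) (B2 : Matrix (Fin a) (Fin m) ℝ)
    (PD1 : ℝ → Matrix (Fin d) (Fin d) ℝ)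
    (hAp22 : IsUnit Ap22)
    (Apf : Matrix (Fin d ⊕ Fin a) (Fin d ⊕ Fin a) ℝ)
    (hApf : Apf = fromBlocks Ap11 Ap12 Ap21 Ap22)
    (Bf : Matrix (Fin d ⊕ Fin a) (Fin m) ℝ)
    (hBf : Bf = fromRows B1 B2)
    (PDf : ℝ → Matrix (Fin d ⊕ Fin a) (Fin d ⊕ Fin a) ℝ)
    (hPDf : ∀ t, PDf t =
      fromBlocks (PD1 t) 0 (-((Ap22ᵀ)⁻¹ * Ap12ᵀ * PD1 t)) 0)
    (Abar : Matrix (Fin d) (Fin d) ℝ) (hAbar : Abar = Ap11 - Ap12 * Ap22⁻¹ * Ap21)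
    (Bbar : Matrix (Fin d) (Fin m) ℝ) (hBbar : Bbar = B1 - Ap12 * Ap22⁻¹ * B2)
    (Ahat1 : ℝ → Matrix (Fin d) (Fin d) ℝ)
    (hAhat1 : ∀ t, Ahat1 t = Abar - Bbar * Bbarᵀ * PD1 t)
    (Ahat2 : ℝ → Matrix (Fin a) (Fin d) ℝ)
    (hAhat2 : ∀ t, Ahat2 t = -(Ap22⁻¹ * Ap21) + Ap22⁻¹ * B2 * Bbarᵀ * PD1 t) :
    (∀ t : ℝ, (Apf - Bf * Bfᵀ * PDf t).toBlocks₂₂ = Ap22) ∧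
    (∀ t : ℝ, ∀ v₁ d₁ : Fin d → ℝ, ∀ v₂ : Fin a → ℝ,
      (0 = (Ap21 - B2 * Bbarᵀ * PD1 t) *ᵥ v₁ + Ap22 *ᵥ v₂) →
      (d₁ = (Ap11 - B1 * Bbarᵀ * PD1 t) *ᵥ v₁ + Ap12 *ᵥ v₂) →
      v₂ = Ahat2 t *ᵥ v₁ ∧ d₁ = Ahat1 t *ᵥ v₁) := by

  have hinv : Ap22⁻¹ * Ap22 = 1 :=
    Matrix.nonsing_inv_mul _ ((Matrix.isUnit_iff_isUnit_det _).mp hAp22)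
  constructor
  · intro t
    subst hApf hBf
    rw [hPDf t]
    ext i j
    simp [Matrix.transpose_fromRows, Matrix.fromRows_mul_fromCols,
      Matrix.fromBlocks_multiply, Matrix.toBlocks₂₂, Matrix.sub_apply]
  · intro t v₁ d₁ v₂ h2 h1
    have hv2 : v₂ = Ahat2 t *ᵥ v₁ := by
      have h : Ap22 *ᵥ v₂ = (-(Ap21 - B2 * Bbarᵀ * PD1 t)) *ᵥ v₁ := by
        rw [Matrix.neg_mulVec]
        exact (neg_eq_of_add_eq_zero_right h2.symm).symm
      have : Ap22⁻¹ *ᵥ (Ap22 *ᵥ v₂) = v₂ := by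
        rw [Matrix.mulVec_mulVec, hinv, Matrix.one_mulVec]
      have key : Ap22⁻¹ * (-(Ap21 - B2 * Bbarᵀ * PD1 t)) = Ahat2 t := by
        rw [hAhat2 t, hBbar]
        simp only [Matrix.mul_add, Matrix.add_mul, Matrix.mul_sub, Matrix.sub_mul,
          Matrix.mul_neg, Matrix.neg_mul, Matrix.mul_assoc]
        abel
      rw [← this, h, Matrix.mulVec_mulVec, key]
    refine ⟨hv2, ?_⟩
    have key : (Ap11 - B1 * Bbarᵀ * PD1 t) + Ap12 * Ahat2 t = Ahat1 t := by
      rw [hAhat1 t, hAhat2 t, hAbar, hBbar]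
      simp only [Matrix.mul_add, Matrix.add_mul, Matrix.mul_sub, Matrix.sub_mul,
        Matrix.mul_neg, Matrix.neg_mul, Matrix.mul_assoc]
      abel
    rw [h1, hv2, Matrix.mulVec_mulVec, ← Matrix.add_mulVec, key]
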